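/- Let n ≥ 2 be even with k = n/2 odd, let N ≥ 2, set ω = exp(2πi/n), and let η_1, …, η_{2N} be elements of an associative unital ℂ-algebra, indexed cyclically mod 2N, satisfying η_j η_{j+1} = ω η_{j+1} η_j for all j, η_j η_k = η_k η_j whenever k ≢ j±1 (mod 2N), and η_j^n = 1 for all j. Define e_j = (1/2) η_j^k. Then the e_j satisfy the Uglov–Ivanov condition: [e_i, [e_i, e_j]] = e_j whenever j ≡ i±1 (mod 2N), and [e_i, e_j] = 0 whenever j ≢ i±1 (mod 2N) and j ≠ i. -/

import Mathlib

section UglovIvanovAux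
variable {A : Type*} [Ring A] [Algebra ℂ A]

lemma qcomm_pow_right (ω : ℂ) (a b : A) (h : a * b = ω • (b * a)) :
    ∀ l : ℕ, a * b ^ l = ω ^ l • (b ^ l * a) := by
  intro l
  induction l with
  | zero => simp
  | succ l ih =>
    rw [pow_succ, ← mul_assoc, ih, smul_mul_assoc, mul_assoc, h, mul_smul_comm,
      ← mul_assoc, ← pow_succ, smul_smul, ← pow_succ]

lemma qcomm_pow_pow (ω : ℂ) (a b : A) (h : a * b = ω • (b * a)) :
    ∀ m l : ℕ, a ^ m * b ^ l = ω ^ (m * l) • (b ^ l * a ^ m) := by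
  intro m l
  induction m with
  | zero => simp
  | succ m ih =>
    rw [pow_succ, mul_assoc, qcomm_pow_right ω a b h l, mul_smul_comm, ← mul_assoc, ih,
      smul_mul_assoc, smul_smul, mul_assoc, ← pow_succ, ← pow_add]
    ring_nf

lemma anticomm_bracket (a b : A) (h : a * b = -(b * a)) (h2 : a * a = (4 : ℂ)⁻¹ • 1) :
    ⁅a, ⁅a, b⁆⁆ = b := by
  have key1 : a * (a * b) = (4 : ℂ)⁻¹ • b := by
    rw [← mul_assoc, h2, smul_mul_assoc, one_mul]
  have key2 : (b * a) * a = (4 : ℂ)⁻¹ • b := by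
    rw [mul_assoc, h2, mul_smul_comm, mul_one]
  have key3 : (a * b) * a = -((4 : ℂ)⁻¹ • b) := by rw [h, neg_mul, key2]
  have key4 : a * (b * a) = -((4 : ℂ)⁻¹ • b) := by
    have hba : b * a = -(a * b) := by rw [h, neg_neg]
    rw [hba, mul_neg, key1]
  have expand : ⁅a, ⁅a, b⁆⁆ = a * (a * b) - a * (b * a) - ((a * b) * a - (b * a) * a) := by
    simp [Ring.lie_def, mul_sub, sub_mul]
  rw [expand, key1, key2, key3, key4]
  module

end UglovIvanovAux

/-- the Uglov–Ivanov condition for `e_j = (1/2) η_j^k`.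
Let `n ≥ 2` be even with `k = n/2` odd, `ω = exp(2πi/n)`, and let `η_j`
(indexed cyclically mod `2N`, `N ≥ 2`) satisfy `η_j η_{j+1} = ω η_{j+1} η_j`,
`η_j η_k = η_k η_j` for `k ≢ j ± 1 (mod 2N)`, and `η_j^n = 1`.  Then the
elements `e_j = (1/2) η_j^k` satisfy `[e_i, [e_i, e_j]] = e_j` whenever
`j ≡ i ± 1 (mod 2N)`, and `[e_i, e_j] = 0` whenever `j ≢ i ± 1 (mod 2N)`
and `j ≠ i`. -/
theorem uglov_ivanov_condition_of_clock_relations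
    (n k : ℕ) (hn : 2 ≤ n) (hk : n = 2 * k) (hkodd : Odd k)
    (N : ℕ) (hN : 2 ≤ N) (A : Type*) [Ring A] [Algebra ℂ A]
    (ω : ℂ) (hω : ω = Complex.exp (2 * Real.pi * Complex.I / n))
    (η : ZMod (2 * N) → A)
    (hanti : ∀ j : ZMod (2 * N), η j * η (j + 1) = ω • (η (j + 1) * η j))
    (hcomm : ∀ j l : ZMod (2 * N), l ≠ j + 1 → l ≠ j - 1 → η j * η l = η l * η j)
    (hpow : ∀ j : ZMod (2 * N), η j ^ n = 1)
    (e : ZMod (2 * N) → A)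
    (he : ∀ j : ZMod (2 * N), e j = (2 : ℂ)⁻¹ • η j ^ k) :
    (∀ i j : ZMod (2 * N), (j = i + 1 ∨ j = i - 1) → ⁅e i, ⁅e i, e j⁆⁆ = e j) ∧
    (∀ i j : ZMod (2 * N), j ≠ i + 1 → j ≠ i - 1 → j ≠ i → ⁅e i, e j⁆ = 0) := by
  have hωkk : ω ^ (k * k) = -1 := by
    have hωk : ω ^ k = -1 := by
      rw [hω, ← Complex.exp_nat_mul]
      have heq : (k : ℂ) * (2 * ↑Real.pi * Complex.I / ↑n) = ↑Real.pi * Complex.I := by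
        have hn0 : (n : ℂ) ≠ 0 := Nat.cast_ne_zero.mpr (by omega)
        rw [hk] at hn0 ⊢
        push_cast at hn0 ⊢
        field_simp
        ring_nf
        exact mul_inv_cancel₀ (right_ne_zero_of_mul hn0)
      rw [heq, Complex.exp_pi_mul_I]
    rw [pow_mul, hωk, hkodd.neg_one_pow]
  -- squares
  have hsq : ∀ i : ZMod (2 * N), e i * e i = (4 : ℂ)⁻¹ • (1 : A) := by
    intro i
    rw [he i, smul_mul_assoc, mul_smul_comm, smul_smul, ← pow_add, ← two_mul, ← hk, hpow i]
    norm_num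
  -- anticommutation for adjacent indices
  have hadj : ∀ i j : ZMod (2 * N), (j = i + 1 ∨ j = i - 1) → e i * e j = -(e j * e i) := by
    intro i j hj
    have key : η i ^ k * η j ^ k = -(η j ^ k * η i ^ k) := by
      rcases hj with rfl | rfl
      · rw [qcomm_pow_pow ω (η i) (η (i + 1)) (hanti i) k k, hωkk, neg_smul, one_smul]
      · have h1 : η (i - 1) * η i = ω • (η i * η (i - 1)) := by
          have h0 := hanti (i - 1)
          rwa [sub_add_cancel] at h0
        have h2 := qcomm_pow_pow ω (η (i - 1)) (η i) h1 k k
        rw [hωkk, neg_smul, one_smul] at h2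
        rw [h2, neg_neg]
    simp only [he, smul_mul_assoc, mul_smul_comm, key, smul_neg]
  refine ⟨fun i j hj => anticomm_bracket (e i) (e j) (hadj i j hj) (hsq i), ?_⟩
  intro i j h1 h2 _h3
  have hc : η i ^ k * η j ^ k = η j ^ k * η i ^ k :=
    (Commute.pow_pow (hcomm i j h1 h2) k k)
  have : e i * e j = e j * e i := by
    simp only [he, smul_mul_assoc, mul_smul_comm, hc, smul_smul]
  rw [Ring.lie_def, this, sub_self]
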